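/- Isomorphism classes of central extensions of a 3-LieDer pair (L, φ_L) by an abelian 3-LieDer pair (M, φ_M) are in bijection with the second cohomology group H²_{3-LieDer}(L, M) with trivial coefficients. -/

import Mathlib

/-- A 3-Lie algebra: a module with a trilinear skew-symmetric bracket satisfying
the fundamental (Filippov) identity. -/
structure ThreeLieAlgebra (K L : Type) [Field K] [AddCommGroup L] [Module K L] where
  br : L →ₗ[K] L →ₗ[K] L →ₗ[K] L
  skew₁₂ : ∀ x y z, br x y z = - br y x z
  skew₂₃ : ∀ x y z, br x y z = - br x z y
  fund : ∀ x y u v w,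
    br x y (br u v w) = br (br x y u) v w + br u (br x y v) w + br u v (br x y w)

/-- A derivation of a 3-Lie algebra. -/
def IsDer {K L : Type} [Field K] [AddCommGroup L] [Module K L]
    (A : ThreeLieAlgebra K L) (φ : L →ₗ[K] L) : Prop :=
  ∀ x y z, φ (A.br x y z) = A.br (φ x) y z + A.br x (φ y) z + A.br x y (φ z)

/-- A central extension of a 3-LieDer pair `(L, φL)` by an abelian 3-LieDer pair
`(M, φM)` (trivial bracket on `M`). -/
structure CentExt (K L M : Type) [Field K] [AddCommGroup L] [Module K L]
    [AddCommGroup M] [Module K M]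
    (A : ThreeLieAlgebra K L) (φL : L →ₗ[K] L) (φM : M →ₗ[K] M) where
  E : Type
  [grp : AddCommGroup E]
  [mod : Module K E]
  str : ThreeLieAlgebra K E
  φE : E →ₗ[K] E
  der : IsDer str φE
  i : M →ₗ[K] E
  p : E →ₗ[K] L
  inj : Function.Injective i
  surj : Function.Surjective p
  exact : LinearMap.range i = LinearMap.ker p
  morph : ∀ a b c, p (str.br a b c) = A.br (p a) (p b) (p c)
  central : ∀ (m : M) (a b : E), str.br (i m) a b = 0
  compat_p : ∀ e, p (φE e) = φL (p e)
  compat_i : ∀ m, φE (i m) = i (φM m)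

attribute [instance] CentExt.grp CentExt.mod

/-- Isomorphism of central extensions of 3-LieDer pairs. -/
def ExtIso {K L M : Type} [Field K] [AddCommGroup L] [Module K L]
    [AddCommGroup M] [Module K M]
    {A : ThreeLieAlgebra K L} {φL : L →ₗ[K] L} {φM : M →ₗ[K] M}
    (c c' : CentExt K L M A φL φM) : Prop :=
  ∃ η : c.E ≃ₗ[K] c'.E,
    (∀ a b d, η (c.str.br a b d) = c'.str.br (η a) (η b) (η d)) ∧
    (∀ e, η (c.φE e) = c'.φE (η e)) ∧
    (∀ m, η (c.i m) = c'.i m) ∧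
    (∀ e, c'.p (η e) = c.p e)

/-- 2-cocycles of the 3-LieDer pair `(L, φL)` with trivial coefficients in `M`. -/
def IsTwoCocycle {K L M : Type} [Field K] [AddCommGroup L] [Module K L]
    [AddCommGroup M] [Module K M]
    (A : ThreeLieAlgebra K L) (φL : L →ₗ[K] L) (φM : M →ₗ[K] M)
    (pc : (L →ₗ[K] L →ₗ[K] L →ₗ[K] M) × (L →ₗ[K] M)) : Prop :=
  (∀ x y z, pc.1 x y z = - pc.1 y x z) ∧
  (∀ x y z, pc.1 x y z = - pc.1 x z y) ∧
  (∀ x y z v w, pc.1 x y (A.br z v w)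
      = pc.1 (A.br x y z) v w + pc.1 z (A.br x y v) w + pc.1 z v (A.br x y w)) ∧
  (∀ x y z, φM (pc.1 x y z) + pc.2 (A.br x y z)
      = pc.1 (φL x) y z + pc.1 x (φL y) z + pc.1 x y (φL z))

/-- Two 2-cocycles are cohomologous iff they differ by the coboundary `∂u` of a
linear map `u : L → M`. -/
def CohomRel {K L M : Type} [Field K] [AddCommGroup L] [Module K L]
    [AddCommGroup M] [Module K M]
    (A : ThreeLieAlgebra K L) (φL : L →ₗ[K] L) (φM : M →ₗ[K] M)
    (a b : {pc : (L →ₗ[K] L →ₗ[K] L →ₗ[K] M) × (L →ₗ[K] M) //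
      IsTwoCocycle A φL φM pc}) : Prop :=
  ∃ u : L →ₗ[K] M,
    (∀ x y z, a.1.1 x y z - b.1.1 x y z = - u (A.br x y z)) ∧
    (∀ x, a.1.2 x - b.1.2 x = φM (u x) - u (φL x))


section Dev

variable {K L M : Type} [Field K] [AddCommGroup L] [Module K L]
    [AddCommGroup M] [Module K M]

/-- Build a trilinear map from a function linear in each slot. -/
def mkTri {V W : Type} [AddCommGroup V] [Module K V] [AddCommGroup W] [Module K W]
    (f : V → V → V → W)
    (h1a : ∀ x x' y z, f (x + x') y z = f x y z + f x' y z)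
    (h1s : ∀ (c : K) x y z, f (c • x) y z = c • f x y z)
    (h2a : ∀ x y y' z, f x (y + y') z = f x y z + f x y' z)
    (h2s : ∀ x (c : K) y z, f x (c • y) z = c • f x y z)
    (h3a : ∀ x y z z', f x y (z + z') = f x y z + f x y z')
    (h3s : ∀ x y (c : K) z, f x y (c • z) = c • f x y z) :
    V →ₗ[K] V →ₗ[K] V →ₗ[K] W where
  toFun x :=
    { toFun := fun y =>
        { toFun := f x y, map_add' := h3a x y, map_smul' := h3s x y }
      map_add' := fun y y' => LinearMap.ext fun z => h2a x y y' z
      map_smul' := fun c y => LinearMap.ext fun z => h2s x c y z }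
  map_add' x x' := LinearMap.ext fun y => LinearMap.ext fun z => h1a x x' y z
  map_smul' c x := LinearMap.ext fun y => LinearMap.ext fun z => h1s c x y z

@[simp] lemma mkTri_apply {V W : Type} [AddCommGroup V] [Module K V]
    [AddCommGroup W] [Module K W] (f : V → V → V → W)
    (h1a : ∀ x x' y z, f (x + x') y z = f x y z + f x' y z)
    (h1s : ∀ (c : K) x y z, f (c • x) y z = c • f x y z)
    (h2a : ∀ x y y' z, f x (y + y') z = f x y z + f x y' z)
    (h2s : ∀ x (c : K) y z, f x (c • y) z = c • f x y z)
    (h3a : ∀ x y z z', f x y (z + z') = f x y z + f x y z')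
    (h3s : ∀ x y (c : K) z, f x y (c • z) = c • f x y z) (x y z : V) :
    mkTri f h1a h1s h2a h2s h3a h3s x y z = f x y z := rfl

variable (A : ThreeLieAlgebra K L) (φL : L →ₗ[K] L) (φM : M →ₗ[K] M)

/-- The central extension associated to a 2-cocycle. -/
def extOf (hφL : IsDer A φL)
    (zc : {pc : (L →ₗ[K] L →ₗ[K] L →ₗ[K] M) × (L →ₗ[K] M) //
      IsTwoCocycle A φL φM pc}) : CentExt K L M A φL φM where
  E := M × L
  str :=
    { br := mkTri (fun a b c => (zc.1.1 a.2 b.2 c.2, A.br a.2 b.2 c.2))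
        (by intros; simp [Prod.ext_iff]) (by intros; simp [Prod.ext_iff])
        (by intros; simp [Prod.ext_iff]) (by intros; simp [Prod.ext_iff])
        (by intros; simp [Prod.ext_iff]) (by intros; simp [Prod.ext_iff])
      skew₁₂ := fun x y z => Prod.ext
        (by simpa using zc.2.1 x.2 y.2 z.2)
        (by simpa using A.skew₁₂ x.2 y.2 z.2)
      skew₂₃ := fun x y z => Prod.ext
        (by simpa using zc.2.2.1 x.2 y.2 z.2)
        (by simpa using A.skew₂₃ x.2 y.2 z.2)
      fund := fun x y u v w => Prod.ext
        (by simpa using zc.2.2.2.1 x.2 y.2 u.2 v.2 w.2)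
        (by simpa using A.fund x.2 y.2 u.2 v.2 w.2) }
  φE := LinearMap.prod ((φM.comp (LinearMap.fst K M L)) + (zc.1.2.comp (LinearMap.snd K M L)))
      (φL.comp (LinearMap.snd K M L))
  der := fun x y z => Prod.ext
    (by simpa using zc.2.2.2.2 x.2 y.2 z.2)
    (by simpa using hφL x.2 y.2 z.2)
  i := LinearMap.inl K M L
  p := LinearMap.snd K M L
  inj := LinearMap.inl_injective
  surj := Prod.snd_surjective
  exact := LinearMap.range_inl K M L
  morph := by intros; rfl
  central := fun m a b => by
    have h2 : ((LinearMap.inl K M L) m).2 = 0 := rfl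
    refine Prod.ext ?_ ?_ <;> simp only [mkTri_apply, h2, Prod.fst_zero, Prod.snd_zero, map_zero, LinearMap.zero_apply]
  compat_p := by intro e; rfl
  compat_i := by intro m; exact Prod.ext (by simp) (by simp)


variable {A} {φL} {φM}

/-- A linear section of the projection of a central extension. -/
noncomputable def sec (c : CentExt K L M A φL φM) : L →ₗ[K] c.E :=
  (LinearMap.exists_rightInverse_of_surjective c.p
    (LinearMap.range_eq_top.2 c.surj)).choose

lemma sec_spec (c : CentExt K L M A φL φM) (x : L) : c.p (sec c x) = x := by
  have h := (LinearMap.exists_rightInverse_of_surjective c.p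
    (LinearMap.range_eq_top.2 c.surj)).choose_spec
  exact DFunLike.congr_fun h x

/-- The retraction onto `M` associated with the section. -/
noncomputable def retr (c : CentExt K L M A φL φM) : c.E →ₗ[K] M :=
  (LinearMap.exists_leftInverse_of_injective c.i
    (LinearMap.ker_eq_bot.2 c.inj)).choose ∘ₗ
  ((LinearMap.id : c.E →ₗ[K] c.E) - (sec c) ∘ₗ c.p)

lemma retr_key (c : CentExt K L M A φL φM) (e : c.E) :
    c.i (retr c e) = e - sec c (c.p e) := by
  have hmem : e - sec c (c.p e) ∈ LinearMap.ker c.p := by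
    simp [sec_spec]
  rw [← c.exact] at hmem
  obtain ⟨m, hm⟩ := hmem
  have hr := (LinearMap.exists_leftInverse_of_injective c.i
    (LinearMap.ker_eq_bot.2 c.inj)).choose_spec
  have : retr c e = m := by
    have h1 : ((LinearMap.id : c.E →ₗ[K] c.E) - (sec c) ∘ₗ c.p) e = e - sec c (c.p e) := rfl
    rw [retr, LinearMap.comp_apply, h1, ← hm]
    exact DFunLike.congr_fun hr m
  rw [this, hm]

lemma central₂ (c : CentExt K L M A φL φM) (a : c.E) (m : M) (b : c.E) :
    c.str.br a (c.i m) b = 0 := by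
  rw [c.str.skew₁₂, c.central, neg_zero]

lemma central₃ (c : CentExt K L M A φL φM) (a b : c.E) (m : M) :
    c.str.br a b (c.i m) = 0 := by
  rw [c.str.skew₂₃, central₂, neg_zero]

/-- The 2-cochain associated to a central extension. -/
noncomputable def cochOf (c : CentExt K L M A φL φM) :
    (L →ₗ[K] L →ₗ[K] L →ₗ[K] M) × (L →ₗ[K] M) :=
  (mkTri (fun x y z => retr c (c.str.br (sec c x) (sec c y) (sec c z)))
    (by intros; simp [map_add]) (by intros; simp [map_smul])
    (by intros; simp [map_add]) (by intros; simp [map_smul])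
    (by intros; simp [map_add]) (by intros; simp [map_smul]),
   retr c ∘ₗ c.φE ∘ₗ sec c)

lemma i_coch₁ (c : CentExt K L M A φL φM) (x y z : L) :
    c.i ((cochOf c).1 x y z)
      = c.str.br (sec c x) (sec c y) (sec c z) - sec c (A.br x y z) := by
  rw [cochOf]
  simp only [mkTri_apply]
  rw [retr_key]
  congr 2
  rw [c.morph, sec_spec, sec_spec, sec_spec]

lemma i_coch₂ (c : CentExt K L M A φL φM) (x : L) :
    c.i ((cochOf c).2 x) = c.φE (sec c x) - sec c (φL x) := by
  rw [cochOf]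
  simp only [LinearMap.comp_apply]
  rw [retr_key]
  congr 2
  rw [c.compat_p, sec_spec]


lemma sec_br (c : CentExt K L M A φL φM) (z v w : L) :
    sec c (A.br z v w)
      = c.str.br (sec c z) (sec c v) (sec c w) - c.i ((cochOf c).1 z v w) := by
  rw [i_coch₁]; abel

lemma sec_phi (c : CentExt K L M A φL φM) (x : L) :
    sec c (φL x) = c.φE (sec c x) - c.i ((cochOf c).2 x) := by
  rw [i_coch₂]; abel

lemma coch_isCocycle (hφL : IsDer A φL) (c : CentExt K L M A φL φM) :
    IsTwoCocycle A φL φM (cochOf c) := by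
  refine ⟨?_, ?_, ?_, ?_⟩
  · intro x y z
    apply c.inj
    rw [map_neg, i_coch₁, i_coch₁, c.str.skew₁₂ (sec c x), A.skew₁₂ x y z, map_neg]
    abel
  · intro x y z
    apply c.inj
    rw [map_neg, i_coch₁, i_coch₁, c.str.skew₂₃ (sec c x), A.skew₂₃ x y z, map_neg]
    abel
  · intro x y z v w
    apply c.inj
    rw [map_add, map_add, i_coch₁, i_coch₁, i_coch₁, i_coch₁]
    have e1 : c.str.br (sec c x) (sec c y) (sec c (A.br z v w))
        = c.str.br (sec c x) (sec c y) (c.str.br (sec c z) (sec c v) (sec c w)) := by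
      rw [sec_br, map_sub, central₃, sub_zero]
    have e2 : c.str.br (sec c (A.br x y z)) (sec c v) (sec c w)
        = c.str.br (c.str.br (sec c x) (sec c y) (sec c z)) (sec c v) (sec c w) := by
      rw [sec_br, map_sub, LinearMap.sub_apply, LinearMap.sub_apply, c.central, sub_zero]
    have e3 : c.str.br (sec c z) (sec c (A.br x y v)) (sec c w)
        = c.str.br (sec c z) (c.str.br (sec c x) (sec c y) (sec c v)) (sec c w) := by
      rw [sec_br, map_sub, LinearMap.sub_apply, central₂, sub_zero]
    have e4 : c.str.br (sec c z) (sec c v) (sec c (A.br x y w))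
        = c.str.br (sec c z) (sec c v) (c.str.br (sec c x) (sec c y) (sec c w)) := by
      rw [sec_br, map_sub, central₃, sub_zero]
    rw [e1, e2, e3, e4, c.str.fund, A.fund x y z v w, map_add, map_add]
    abel
  · intro x y z
    apply c.inj
    rw [map_add, map_add, map_add, ← c.compat_i, i_coch₁, i_coch₂, i_coch₁, i_coch₁, i_coch₁]
    have f1 : c.str.br (sec c (φL x)) (sec c y) (sec c z)
        = c.str.br (c.φE (sec c x)) (sec c y) (sec c z) := by
      rw [sec_phi, map_sub, LinearMap.sub_apply, LinearMap.sub_apply, c.central, sub_zero]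
    have f2 : c.str.br (sec c x) (sec c (φL y)) (sec c z)
        = c.str.br (sec c x) (c.φE (sec c y)) (sec c z) := by
      rw [sec_phi, map_sub, LinearMap.sub_apply, central₂, sub_zero]
    have f3 : c.str.br (sec c x) (sec c y) (sec c (φL z))
        = c.str.br (sec c x) (sec c y) (c.φE (sec c z)) := by
      rw [sec_phi, map_sub, central₃, sub_zero]
    have hL : sec c (φL (A.br x y z))
        = sec c (A.br (φL x) y z) + sec c (A.br x (φL y) z) + sec c (A.br x y (φL z)) := by
      rw [← map_add, ← map_add, ← hφL x y z]
    rw [f1, f2, f3, map_sub, hL]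
    have hder := c.der (sec c x) (sec c y) (sec c z)
    rw [hder]
    abel

/-- The cocycle associated to a central extension. -/
noncomputable def cocOf (hφL : IsDer A φL) (c : CentExt K L M A φL φM) :
    {pc : (L →ₗ[K] L →ₗ[K] L →ₗ[K] M) × (L →ₗ[K] M) // IsTwoCocycle A φL φM pc} :=
  ⟨cochOf c, coch_isCocycle hφL c⟩


lemma iso_to_cohom (hφL : IsDer A φL) {c c' : CentExt K L M A φL φM}
    (h : ExtIso c c') : CohomRel A φL φM (cocOf hφL c) (cocOf hφL c') := by
  obtain ⟨η, hbr, hφ, hi, hp⟩ := h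
  refine ⟨retr c' ∘ₗ (η.toLinearMap ∘ₗ sec c - sec c'), ?_, ?_⟩
  all_goals
    have hu : ∀ t, c'.i ((retr c' ∘ₗ (η.toLinearMap ∘ₗ sec c - sec c')) t)
        = η (sec c t) - sec c' t := by
      intro t
      rw [LinearMap.comp_apply, retr_key]
      simp [map_sub, hp, sec_spec]
    have g : ∀ t, sec c' t
        = η (sec c t) - c'.i ((retr c' ∘ₗ (η.toLinearMap ∘ₗ sec c - sec c')) t) := by
      intro t; rw [hu]; abel
  · intro x y z
    apply c'.inj
    rw [map_sub, map_neg]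
    simp only [cocOf]
    rw [← hi ((cochOf c).1 x y z), i_coch₁ c, i_coch₁ c',
      map_sub η, hbr, hu (A.br x y z)]
    have k : c'.str.br (sec c' x) (sec c' y) (sec c' z)
        = c'.str.br (η (sec c x)) (η (sec c y)) (η (sec c z)) := by
      rw [g x, g y, g z]
      simp [map_sub, LinearMap.sub_apply, c'.central, central₂, central₃]
    rw [k]
    abel
  · intro x
    apply c'.inj
    rw [map_sub, map_sub]
    simp only [cocOf]
    rw [← hi ((cochOf c).2 x), i_coch₂ c, i_coch₂ c',
      ← c'.compat_i, map_sub η, hφ, hu x, hu (φL x), map_sub]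
    abel


lemma cohom_to_iso (hφL : IsDer A φL)
    {a b : {pc : (L →ₗ[K] L →ₗ[K] L →ₗ[K] M) × (L →ₗ[K] M) // IsTwoCocycle A φL φM pc}}
    (h : CohomRel A φL φM a b) :
    ExtIso (extOf A φL φM hφL a) (extOf A φL φM hφL b) := by
  obtain ⟨u, hu1, hu2⟩ := h
  refine ⟨LinearEquiv.ofLinear
      (LinearMap.prod (LinearMap.fst K M L + u ∘ₗ LinearMap.snd K M L) (LinearMap.snd K M L))
      (LinearMap.prod (LinearMap.fst K M L - u ∘ₗ LinearMap.snd K M L) (LinearMap.snd K M L))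
      (LinearMap.ext fun e => Prod.ext
        (show (e.1 - u e.2) + u e.2 = e.1 by abel) rfl)
      (LinearMap.ext fun e => Prod.ext
        (show (e.1 + u e.2) - u e.2 = e.1 by abel) rfl), ?_, ?_, ?_, ?_⟩
  · intro p q r
    refine Prod.ext ?_ ?_
    · show a.1.1 p.2 q.2 r.2 + u (A.br p.2 q.2 r.2) = b.1.1 p.2 q.2 r.2
      have h := hu1 p.2 q.2 r.2
      rw [sub_eq_iff_eq_add.mp h]; abel
    · rfl
  · intro e
    refine Prod.ext ?_ ?_
    · show (φM e.1 + a.1.2 e.2) + u (φL e.2) = φM (e.1 + u e.2) + b.1.2 e.2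
      have h := hu2 e.2
      rw [map_add φM, sub_eq_iff_eq_add.mp h]; abel
    · rfl
  · intro m
    refine Prod.ext ?_ ?_
    · show m + u 0 = m
      simp
    · rfl
  · intro e
    rfl


lemma p_i (c : CentExt K L M A φL φM) (m : M) : c.p (c.i m) = 0 := by
  have : c.i m ∈ LinearMap.ker c.p := c.exact ▸ LinearMap.mem_range_self c.i m
  exact this

lemma roundExt (hφL : IsDer A φL) (c : CentExt K L M A φL φM) :
    ExtIso (extOf A φL φM hφL (cocOf hφL c)) c := by
  have hgf : ∀ e : M × L,
      ((retr c).prod c.p) (((c.i ∘ₗ LinearMap.fst K M L) + (sec c ∘ₗ LinearMap.snd K M L)) e)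
        = e := by
    intro e
    have hp : c.p (c.i e.1 + sec c e.2) = e.2 := by
      rw [map_add, p_i, sec_spec, zero_add]
    refine Prod.ext ?_ ?_
    · show retr c (c.i e.1 + sec c e.2) = e.1
      apply c.inj
      rw [retr_key]
      show c.i e.1 + sec c e.2 - sec c (c.p (c.i e.1 + sec c e.2)) = c.i e.1
      rw [hp]; abel
    · exact hp
  have hfg : ∀ e : c.E,
      ((c.i ∘ₗ LinearMap.fst K M L) + (sec c ∘ₗ LinearMap.snd K M L)) (((retr c).prod c.p) e)
        = e := by
    intro e
    show c.i (retr c e) + sec c (c.p e) = e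
    rw [retr_key]; abel
  refine ⟨LinearEquiv.ofLinear
      ((c.i ∘ₗ LinearMap.fst K M L) + (sec c ∘ₗ LinearMap.snd K M L))
      ((retr c).prod c.p)
      (LinearMap.ext hfg) (LinearMap.ext hgf), ?_, ?_, ?_, ?_⟩
  · intro p q r
    show c.i ((cochOf c).1 p.2 q.2 r.2) + sec c (A.br p.2 q.2 r.2)
      = c.str.br (c.i p.1 + sec c p.2) (c.i q.1 + sec c q.2) (c.i r.1 + sec c r.2)
    rw [i_coch₁]
    simp only [map_add, LinearMap.add_apply, c.central, central₂, central₃,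
      zero_add, add_zero]
    abel
  · intro e
    show c.i (φM e.1 + (cochOf c).2 e.2) + sec c (φL e.2)
      = c.φE (c.i e.1 + sec c e.2)
    rw [map_add c.i, i_coch₂, map_add c.φE, c.compat_i]
    abel
  · intro m
    show c.i m + sec c 0 = c.i m
    rw [map_zero, add_zero]
  · intro e
    show c.p (c.i e.1 + sec c e.2) = e.2
    rw [map_add, p_i, sec_spec, zero_add]

lemma roundCoc (hφL : IsDer A φL)
    (a : {pc : (L →ₗ[K] L →ₗ[K] L →ₗ[K] M) × (L →ₗ[K] M) // IsTwoCocycle A φL φM pc}) :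
    CohomRel A φL φM (cocOf hφL (extOf A φL φM hφL a)) a := by
  set c := extOf A φL φM hφL a with hc
  have hs2 : ∀ x, (sec c x).2 = x := fun x => sec_spec c x
  have hρ : ∀ e : M × L, retr c e = e.1 - (sec c e.2).1 := by
    intro e
    have h := congrArg Prod.fst (retr_key c e)
    exact h
  refine ⟨LinearMap.fst K M L ∘ₗ sec c, ?_, ?_⟩
  · intro x y z
    show retr c (c.str.br (sec c x) (sec c y) (sec c z)) - a.1.1 x y z
      = -(sec c (A.br x y z)).1
    have hbr : c.str.br (sec c x) (sec c y) (sec c z)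
        = (a.1.1 x y z, A.br x y z) := by
      show (a.1.1 (sec c x).2 (sec c y).2 (sec c z).2,
        A.br (sec c x).2 (sec c y).2 (sec c z).2) = _
      rw [hs2, hs2, hs2]
    rw [hbr, hρ]
    show a.1.1 x y z - (sec c (A.br x y z)).1 - a.1.1 x y z = _
    abel
  · intro x
    show retr c (c.φE (sec c x)) - a.1.2 x
      = φM ((sec c x).1) - (sec c (φL x)).1
    have hφ : c.φE (sec c x) = (φM ((sec c x).1) + a.1.2 x, φL x) := by
      show (φM ((sec c x).1) + a.1.2 (sec c x).2, φL (sec c x).2) = _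
      rw [hs2]
    rw [hφ, hρ]
    show φM ((sec c x).1) + a.1.2 x - (sec c (φL x)).1 - a.1.2 x = _
    abel

end Dev

/-- isomorphism classes of central extensions of a 3-LieDer pair
`(L, φL)` by an abelian 3-LieDer pair `(M, φM)` are in bijection with the second
cohomology group `H²_{3-LieDer}(L, M)` with trivial coefficients. -/
theorem central_extensions_classified_by_H2
    (K L M : Type) [Field K] [AddCommGroup L] [Module K L]
    [AddCommGroup M] [Module K M]
    (A : ThreeLieAlgebra K L) (φL : L →ₗ[K] L) (hφL : IsDer A φL)
    (φM : M →ₗ[K] M) :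
    Nonempty (Quot (ExtIso (A := A) (φL := φL) (φM := φM))
      ≃ Quot (CohomRel A φL φM)) := by
  refine ⟨{
    toFun := Quot.lift (fun c => Quot.mk _ (cocOf hφL c))
      (fun c c' h => Quot.sound (iso_to_cohom hφL h))
    invFun := Quot.lift (fun a => Quot.mk _ (extOf A φL φM hφL a))
      (fun a b h => Quot.sound (cohom_to_iso hφL h))
    left_inv := ?_
    right_inv := ?_ }⟩
  · refine Quot.ind fun c => ?_
    exact Quot.sound (roundExt hφL c)
  · refine Quot.ind fun a => ?_
    exact Quot.sound (roundCoc hφL a)
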